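/- arXiv:2108.07715 — 3 statements merged into one kernel-verified Lean document; each statement's English description precedes it below -/
import Mathlib

section
/- (L¹ time regularity of the discrete cumulative distribution) Suppose (x_i, v_i)_{i=1}^N follows the sticky particle Cucker–Smale dynamics associated to masses (m_i)_{i=1}^N and protocol φ. Define M_N(x,t) = −1/2 + Σ_{i=1}^N m_i·1_{x ≥ x_i(t)}. Then for all 0 ≤ s ≤ t, ∫_ℝ |M_N(x,t) − M_N(x,s)| dx ≤ Σ_{i=1}^N m_i |x_i(t) − x_i(s)| ≤ (t − s) · max_{1≤i≤N} |v_i(0)|. -/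
open MeasureTheory Set Filter
open scoped Classical
open scoped Topology

/-- `Φ(x) = ∫_0^x φ(y) dy`, the odd antiderivative of the communication protocol. -/
noncomputable def Phi (φ : ℝ → ℝ) (x : ℝ) : ℝ := ∫ y in (0:ℝ)..x, φ y

/-- The sticky particle Cucker–Smale dynamics with `N` particles, masses `m`,
communication protocol `φ`, collision-time set `C`, positions `x` and velocities `v`. -/
structure StickyCS (N : ℕ) (m : Fin N → ℝ) (φ : ℝ → ℝ) (C : Set ℝ)
    (x v : Fin N → ℝ → ℝ) : Prop where
  m_pos : ∀ i, 0 < m i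
  m_sum : ∑ i, m i = 1
  φ_nonneg : ∀ z, 0 ≤ φ z
  φ_even : ∀ z, φ (-z) = φ z
  φ_locint : ∀ a b : ℝ, IntervalIntegrable φ volume a b
  φ_anti : AntitoneOn φ (Ioi 0)
  φ_cont : ContinuousOn φ {(0:ℝ)}ᶜ
  C_fin : C.Finite
  C_pos : C ⊆ Ioi 0
  x_cont : ∀ i, ContinuousOn (x i) (Ici 0)
  x_ord : ∀ i j : Fin N, i ≤ j → ∀ t ∈ Ici (0:ℝ), x i t ≤ x j t
  v_rc : ∀ i, ∀ t ∈ Ici (0:ℝ), ContinuousWithinAt (v i) (Ici t) t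
  x_deriv : ∀ i, ∀ t ∈ Ici (0:ℝ) \ C, HasDerivWithinAt (x i) (v i t) (Ici 0) t
  v_deriv : ∀ i, ∀ t ∈ Ici (0:ℝ) \ C, HasDerivWithinAt (v i)
      (∑ j ∈ Finset.univ.filter (fun j => x j t ≠ x i t),
        m j * φ (x j t - x i t) * (v j t - v i t)) (Ici 0) t
  sticky : ∀ i j : Fin N, ∀ s t : ℝ, 0 ≤ s → s ≤ t → x i s = x j s → x i t = x j t
  collide : ∀ τ ∈ C, ∀ i : Fin N,
      v i τ = (∑ j ∈ Finset.univ.filter (fun j => x j τ = x i τ),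
                m j * Function.leftLim (v j) τ)
              / (∑ j ∈ Finset.univ.filter (fun j => x j τ = x i τ), m j)

private lemma mvt_clean {f f' : ℝ → ℝ} {K a b : ℝ} (hab : a ≤ b)
    (hcont : ContinuousOn f (Icc a b))
    (hder : ∀ u ∈ Ioo a b, HasDerivWithinAt f (f' u) (Ici u) u)
    (hbd : ∀ u ∈ Ioo a b, |f' u| ≤ K) :
    |f b - f a| ≤ K * (b - a) := by
  rcases eq_or_lt_of_le hab with rfl | hlt
  · simp
  have key : ∀ η ∈ Ioo a b, |f b - f η| ≤ K * (b - η) := by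
    intro η hη
    have h1 : ContinuousOn f (Icc η b) := hcont.mono (Icc_subset_Icc hη.1.le le_rfl)
    have h2 : ∀ u ∈ Ico η b, HasDerivWithinAt f (f' u) (Ici u) u := fun u hu =>
      hder u ⟨lt_of_lt_of_le hη.1 hu.1, hu.2⟩
    have h3 : ∀ u ∈ Ico η b, ‖f' u‖ ≤ K := fun u hu => by
      simpa [Real.norm_eq_abs] using hbd u ⟨lt_of_lt_of_le hη.1 hu.1, hu.2⟩
    have := norm_image_sub_le_of_norm_deriv_right_le_segment h1 h2 h3 b (right_mem_Icc.2 hη.2.le)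
    simpa [Real.norm_eq_abs] using this
  have hne : (𝓝[Ioo a b] a).NeBot := by
    rw [nhdsWithin_Ioo_eq_nhdsGT hlt]
    exact nhdsGT_neBot a
  have hfa : Tendsto f (𝓝[Ioo a b] a) (𝓝 (f a)) := by
    have : ContinuousWithinAt f (Icc a b) a := hcont a (left_mem_Icc.2 hab)
    exact this.tendsto.mono_left (nhdsWithin_mono a Ioo_subset_Icc_self)
  have hf_tendsto : Tendsto (fun η => |f b - f η|) (𝓝[Ioo a b] a) (𝓝 (|f b - f a|)) :=
    (tendsto_const_nhds.sub hfa).abs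
  have hg_tendsto : Tendsto (fun η => K * (b - η)) (𝓝[Ioo a b] a) (𝓝 (K * (b - a))) := by
    have : Continuous (fun η : ℝ => K * (b - η)) := by continuity
    exact (this.tendsto a).mono_left nhdsWithin_le_nhds
  exact le_of_tendsto_of_tendsto hf_tendsto hg_tendsto
    (eventually_nhdsWithin_of_forall key)

private lemma mvt_finexc {f f' : ℝ → ℝ} {E : Set ℝ} (hE : E.Finite) {K : ℝ}
    {a b : ℝ} (hab : a ≤ b) (hcont : ContinuousOn f (Icc a b))
    (hder : ∀ u, u ∈ Ioo a b → u ∉ E → HasDerivWithinAt f (f' u) (Ici u) u)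
    (hbd : ∀ u, u ∈ Ioo a b → u ∉ E → |f' u| ≤ K) :
    |f b - f a| ≤ K * (b - a) := by
  have main : ∀ n : ℕ, ∀ a b : ℝ, (E ∩ Ioo a b).ncard ≤ n → a ≤ b →
      ContinuousOn f (Icc a b) →
      (∀ u, u ∈ Ioo a b → u ∉ E → HasDerivWithinAt f (f' u) (Ici u) u) →
      (∀ u, u ∈ Ioo a b → u ∉ E → |f' u| ≤ K) →
      |f b - f a| ≤ K * (b - a) := by
    intro n
    induction n with
    | zero =>
      intro a b hcard hab hcont hder hbd
      have hempty : E ∩ Ioo a b = ∅ := by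
        have h0 : (E ∩ Ioo a b).ncard = 0 := Nat.le_zero.mp hcard
        exact (Set.ncard_eq_zero (hE.inter_of_left _)).mp h0
      refine mvt_clean hab hcont (fun u hu => hder u hu ?_) (fun u hu => hbd u hu ?_) <;>
        · intro huE
          exact absurd (Set.mem_inter huE hu) (by simp [hempty])
    | succ n IH =>
      intro a b hcard hab hcont hder hbd
      by_cases hempty : (E ∩ Ioo a b) = ∅
      · refine mvt_clean hab hcont (fun u hu => hder u hu ?_) (fun u hu => hbd u hu ?_) <;>
          · intro huE
            exact absurd (Set.mem_inter huE hu) (by simp [hempty])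
      · obtain ⟨c, hcE, hcI⟩ := Set.nonempty_iff_ne_empty.mpr hempty
        have hfin : (E ∩ Ioo a b).Finite := hE.inter_of_left _
        have hsub1 : E ∩ Ioo a c ⊆ (E ∩ Ioo a b) \ {c} := by
          rintro u ⟨huE, hu⟩
          exact ⟨⟨huE, hu.1, hu.2.trans hcI.2⟩, by rintro rfl; exact lt_irrefl u hu.2⟩
        have hsub2 : E ∩ Ioo c b ⊆ (E ∩ Ioo a b) \ {c} := by
          rintro u ⟨huE, hu⟩
          exact ⟨⟨huE, hcI.1.trans hu.1, hu.2⟩, by rintro rfl; exact lt_irrefl u hu.1⟩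
        have hdcard : ((E ∩ Ioo a b) \ {c}).ncard ≤ n := by
          have := Set.ncard_diff_singleton_of_mem (Set.mem_inter hcE hcI)
          omega
        have h1 : (E ∩ Ioo a c).ncard ≤ n :=
          le_trans (Set.ncard_le_ncard hsub1 hfin.diff) hdcard
        have h2 : (E ∩ Ioo c b).ncard ≤ n :=
          le_trans (Set.ncard_le_ncard hsub2 hfin.diff) hdcard
        have t1 := IH a c h1 hcI.1.le (hcont.mono (Icc_subset_Icc le_rfl hcI.2.le))
          (fun u hu huE => hder u ⟨hu.1, hu.2.trans hcI.2⟩ huE)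
          (fun u hu huE => hbd u ⟨hu.1, hu.2.trans hcI.2⟩ huE)
        have t2 := IH c b h2 hcI.2.le (hcont.mono (Icc_subset_Icc hcI.1.le le_rfl))
          (fun u hu huE => hder u ⟨hcI.1.trans hu.1, hu.2⟩ huE)
          (fun u hu huE => hbd u ⟨hcI.1.trans hu.1, hu.2⟩ huE)
        have habs := abs_sub_le (f b) (f c) (f a)
        nlinarith [habs, t1, t2]
  exact main ((E ∩ Ioo a b).ncard) a b le_rfl hab hcont hder hbd


set_option maxHeartbeats 1000000 in
private lemma maxprin {N : ℕ} {m : Fin N → ℝ} {φ : ℝ → ℝ} {C : Set ℝ}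
    {x v : Fin N → ℝ → ℝ} (h : StickyCS N m φ C x v)
    {a b : ℝ} (ha : 0 ≤ a) (hab : a ≤ b) (hC : ∀ u ∈ Icc a b, u ∉ C)
    {A B : ℝ} (hA : ∀ j, A ≤ v j a) (hB : ∀ j, v j a ≤ B) :
    ∀ t ∈ Icc a b, ∀ i, A ≤ v i t ∧ v i t ≤ B := by
  have key : ∀ ε > (0:ℝ), ∀ t ∈ Icc a b, ∀ i,
      v i t ≤ B + ε * (t - a) ∧ A - ε * (t - a) ≤ v i t := by
    intro ε hε
    set S : Set ℝ := {r | r ∈ Icc a b ∧ ∀ u ∈ Icc a r, ∀ i,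
      v i u ≤ B + ε * (u - a) ∧ A - ε * (u - a) ≤ v i u} with hSdef
    have haS : a ∈ S := by
      refine ⟨⟨le_rfl, hab⟩, ?_⟩
      intro u hu i
      have hu' : u = a := le_antisymm hu.2 hu.1
      subst hu'
      simp only [sub_self, mul_zero]
      exact ⟨by simpa using hB i, by simpa using hA i⟩
    have hbdd : BddAbove S := ⟨b, fun r hr => hr.1.2⟩
    have hne : S.Nonempty := ⟨a, haS⟩
    set c := sSup S with hcdef
    have hac : a ≤ c := le_csSup hbdd haS
    have hcb : c ≤ b := csSup_le hne fun r hr => hr.1.2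
    have hlo : ∀ u, a ≤ u → u < c → ∀ i,
        v i u ≤ B + ε * (u - a) ∧ A - ε * (u - a) ≤ v i u := by
      intro u hau huc i
      obtain ⟨r, hrS, hur⟩ := exists_lt_of_lt_csSup hne huc
      exact hrS.2 u ⟨hau, hur.le⟩ i
    have hcC : c ∉ C := hC c ⟨hac, hcb⟩
    have hc0 : (0:ℝ) ≤ c := le_trans ha hac
    have hcbound : ∀ i, v i c ≤ B + ε * (c - a) ∧ A - ε * (c - a) ≤ v i c := by
      rcases eq_or_lt_of_le hac with heq | hlt
      · intro i
        rw [← heq]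
        simp only [sub_self, mul_zero]
        exact ⟨by simpa using hB i, by simpa using hA i⟩
      · intro i
        have hcd := h.v_deriv i c ⟨hc0, hcC⟩
        have hcont : ContinuousWithinAt (v i) (Ici 0) c := hcd.continuousWithinAt
        have hfil : 𝓝[Ico a c] c ≤ 𝓝[Ici 0] c :=
          nhdsWithin_mono _ fun u hu => le_trans ha hu.1
        have hneb : (𝓝[Ico a c] c).NeBot := by
          rw [nhdsWithin_Ico_eq_nhdsLT hlt]
          exact nhdsLT_neBot c
        have htend : Tendsto (v i) (𝓝[Ico a c] c) (𝓝 (v i c)) :=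
          hcont.tendsto.mono_left hfil
        have hlin : Tendsto (fun u => B + ε * (u - a)) (𝓝[Ico a c] c)
            (𝓝 (B + ε * (c - a))) := by
          have : Continuous (fun u : ℝ => B + ε * (u - a)) :=
            continuous_const.add (continuous_const.mul (continuous_id.sub continuous_const))
          exact (this.tendsto c).mono_left nhdsWithin_le_nhds
        have hlin2 : Tendsto (fun u => A - ε * (u - a)) (𝓝[Ico a c] c)
            (𝓝 (A - ε * (c - a))) := by
          have : Continuous (fun u : ℝ => A - ε * (u - a)) :=
            continuous_const.sub (continuous_const.mul (continuous_id.sub continuous_const))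
          exact (this.tendsto c).mono_left nhdsWithin_le_nhds
        constructor
        · refine le_of_tendsto_of_tendsto htend hlin ?_
          exact eventually_nhdsWithin_of_forall fun u hu => (hlo u hu.1 hu.2 i).1
        · refine le_of_tendsto_of_tendsto hlin2 htend ?_
          exact eventually_nhdsWithin_of_forall fun u hu => (hlo u hu.1 hu.2 i).2
    have hceqb : c = b := by
      by_contra hcb'
      have hclt : c < b := lt_of_le_of_ne hcb hcb'
      -- per-particle extension to the right of c
      have hup : ∀ i : Fin N, ∃ d, c < d ∧ ∀ u ∈ Ioc c d, v i u ≤ B + ε * (u - a) := by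
        intro i
        by_cases hbdry : v i c = B + ε * (c - a)
        · -- boundary case: use the derivative
          have hcd := h.v_deriv i c ⟨hc0, hcC⟩
          set D := ∑ j ∈ Finset.univ.filter (fun j => x j c ≠ x i c),
              m j * φ (x j c - x i c) * (v j c - v i c) with hD
          have hDle : D ≤ 0 := by
            apply Finset.sum_nonpos
            intro j hj
            have h1 : 0 ≤ m j * φ (x j c - x i c) :=
              mul_nonneg (h.m_pos j).le (h.φ_nonneg _)
            have h2 : v j c - v i c ≤ 0 := by
              have := (hcbound j).1
              rw [hbdry] at *
              linarith [this]
            exact mul_nonpos_of_nonneg_of_nonpos h1 h2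
          have hder' : HasDerivWithinAt (v i) D (Ici c) c :=
            hcd.mono (Ici_subset_Ici.mpr hc0)
          have hslope : Tendsto (slope (v i) c) (𝓝[>] c) (𝓝 D) := by
            have := hasDerivWithinAt_iff_tendsto_slope.mp hder'
            rwa [Ici_sdiff_left] at this
          have hev : ∀ᶠ u in 𝓝[>] c, slope (v i) c u < ε :=
            hslope.eventually_lt_const (lt_of_le_of_lt hDle hε)
          obtain ⟨d, hd, hsub⟩ := mem_nhdsGT_iff_exists_Ioc_subset.mp hev
          refine ⟨d, hd, ?_⟩
          intro u hu
          have hs : slope (v i) c u < ε := hsub hu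
          rw [slope_def_field] at hs
          have hcu : c < u := hu.1
          have : v i u - v i c < ε * (u - c) := by
            rw [div_lt_iff₀ (by linarith)] at hs
            linarith [hs]
          rw [hbdry] at this
          nlinarith [this]
        · -- strict case: use right continuity
          have hstrict : v i c < B + ε * (c - a) :=
            lt_of_le_of_ne (hcbound i).1 hbdry
          have hrc := h.v_rc i c hc0
          have hev : ∀ᶠ u in 𝓝[Ici c] c, v i u < B + ε * (c - a) :=
            hrc.tendsto.eventually_lt_const hstrict
          obtain ⟨d, hd, hsub⟩ := mem_nhdsGE_iff_exists_Icc_subset.mp hev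
          refine ⟨d, hd, ?_⟩
          intro u hu
          have hv : v i u < B + ε * (c - a) := hsub ⟨hu.1.le, hu.2⟩
          have hua : c - a ≤ u - a := by linarith [hu.1.le]
          nlinarith [hv, hε]
      have hdn : ∀ i : Fin N, ∃ d, c < d ∧ ∀ u ∈ Ioc c d, A - ε * (u - a) ≤ v i u := by
        intro i
        by_cases hbdry : v i c = A - ε * (c - a)
        · have hcd := h.v_deriv i c ⟨hc0, hcC⟩
          set D := ∑ j ∈ Finset.univ.filter (fun j => x j c ≠ x i c),
              m j * φ (x j c - x i c) * (v j c - v i c) with hD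
          have hDge : 0 ≤ D := by
            apply Finset.sum_nonneg
            intro j hj
            have h1 : 0 ≤ m j * φ (x j c - x i c) :=
              mul_nonneg (h.m_pos j).le (h.φ_nonneg _)
            have h2 : 0 ≤ v j c - v i c := by
              have := (hcbound j).2
              rw [hbdry] at *
              linarith [this]
            exact mul_nonneg h1 h2
          have hder' : HasDerivWithinAt (v i) D (Ici c) c :=
            hcd.mono (Ici_subset_Ici.mpr hc0)
          have hslope : Tendsto (slope (v i) c) (𝓝[>] c) (𝓝 D) := by
            have := hasDerivWithinAt_iff_tendsto_slope.mp hder'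
            rwa [Ici_sdiff_left] at this
          have hev : ∀ᶠ u in 𝓝[>] c, -ε < slope (v i) c u :=
            hslope.eventually_const_lt (lt_of_lt_of_le (by linarith) hDge)
          obtain ⟨d, hd, hsub⟩ := mem_nhdsGT_iff_exists_Ioc_subset.mp hev
          refine ⟨d, hd, ?_⟩
          intro u hu
          have hs : -ε < slope (v i) c u := hsub hu
          rw [slope_def_field] at hs
          have hcu : c < u := hu.1
          have : -(ε * (u - c)) < v i u - v i c := by
            rw [lt_div_iff₀ (by linarith : (0:ℝ) < u - c)] at hs
            nlinarith [hs]
          rw [hbdry] at this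
          nlinarith [this]
        · have hstrict : A - ε * (c - a) < v i c :=
            lt_of_le_of_ne (hcbound i).2 (fun e => hbdry e.symm)
          have hrc := h.v_rc i c hc0
          have hev : ∀ᶠ u in 𝓝[Ici c] c, A - ε * (c - a) < v i u :=
            hrc.tendsto.eventually_const_lt hstrict
          obtain ⟨d, hd, hsub⟩ := mem_nhdsGE_iff_exists_Icc_subset.mp hev
          refine ⟨d, hd, ?_⟩
          intro u hu
          have hv : A - ε * (c - a) < v i u := hsub ⟨hu.1.le, hu.2⟩
          have hua : c - a ≤ u - a := by linarith [hu.1.le]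
          nlinarith [hv, hε]
      -- combine the finitely many δ's
      choose dup hdup hPup using hup
      choose ddn hddn hPdn using hdn
      rcases isEmpty_or_nonempty (Fin N) with hemp | hnemp
      · -- N = 0 : S = Icc a b trivially, so c = b; contradiction
        apply hcb'
        have : b ∈ S := ⟨⟨hab, le_rfl⟩, fun u hu i => (IsEmpty.elim hemp i)⟩
        exact le_antisymm hcb (le_csSup hbdd this)
      · obtain ⟨i0⟩ := hnemp
        set r := min (min (Finset.univ.inf' ⟨i0, Finset.mem_univ _⟩ dup)
          (Finset.univ.inf' ⟨i0, Finset.mem_univ _⟩ ddn)) b with hrdef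
        have hrc : c < r := by
          apply lt_min (lt_min ?_ ?_) hclt
          · exact (Finset.lt_inf'_iff _).mpr fun i _ => hdup i
          · exact (Finset.lt_inf'_iff _).mpr fun i _ => hddn i
        have hrS : r ∈ S := by
          refine ⟨⟨le_trans hac hrc.le, min_le_right _ _⟩, ?_⟩
          intro u hu i
          rcases le_or_gt u c with huc | huc
          · rcases eq_or_lt_of_le huc with heq | hlt'
            · subst heq; exact ⟨(hcbound i).1, (hcbound i).2⟩
            · exact hlo u hu.1 hlt' i
          · have hu1 : u ∈ Ioc c (dup i) := ⟨huc, le_trans hu.2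
              (le_trans (min_le_left _ _) (le_trans (min_le_left _ _)
                (Finset.inf'_le _ (Finset.mem_univ i))))⟩
            have hu2 : u ∈ Ioc c (ddn i) := ⟨huc, le_trans hu.2
              (le_trans (min_le_left _ _) (le_trans (min_le_right _ _)
                (Finset.inf'_le _ (Finset.mem_univ i))))⟩
            exact ⟨hPup i u hu1, hPdn i u hu2⟩
        have : r ≤ c := le_csSup hbdd hrS
        exact absurd this (not_le.mpr hrc)
    -- conclusion for this ε
    intro t ht i
    rcases eq_or_lt_of_le ht.2 with heq | hlt
    · subst heq
      rw [← hceqb]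
      exact hcbound i
    · rw [← hceqb] at hlt
      exact hlo t ht.1 hlt i
  -- remove ε
  intro t ht i
  constructor
  · have : ∀ ε' > (0:ℝ), A - ε' ≤ v i t := by
      intro ε' hε'
      have hba : (0:ℝ) < b - a + 1 := by linarith [hab]
      have hεpos : 0 < ε' / (b - a + 1) := div_pos hε' hba
      have := (key _ hεpos t ht i).2
      have hta : t - a ≤ b - a := by linarith [ht.2]
      have h1 : ε' / (b - a + 1) * (t - a) ≤ ε' := by
        rw [div_mul_eq_mul_div, div_le_iff₀ hba]
        nlinarith [ht.1, hab, hε'.le, hta]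
      linarith
    linarith [le_of_forall_pos_le_add (fun ε' hε' => by linarith [this ε' hε'] : ∀ ε' > (0:ℝ), A ≤ v i t + ε')]
  · have : ∀ ε' > (0:ℝ), v i t ≤ B + ε' := by
      intro ε' hε'
      have hba : (0:ℝ) < b - a + 1 := by linarith [hab]
      have hεpos : 0 < ε' / (b - a + 1) := div_pos hε' hba
      have := (key _ hεpos t ht i).1
      have hta : t - a ≤ b - a := by linarith [ht.2]
      have h1 : ε' / (b - a + 1) * (t - a) ≤ ε' := by
        rw [div_mul_eq_mul_div, div_le_iff₀ hba]
        nlinarith [ht.1, hab, hε'.le, hta]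
      linarith
    exact le_of_forall_pos_le_add this

private lemma propag {N : ℕ} {m : Fin N → ℝ} {φ : ℝ → ℝ} {C : Set ℝ}
    {x v : Fin N → ℝ → ℝ} (h : StickyCS N m φ C x v)
    {σ b : ℝ} (hσ : 0 ≤ σ) (hC : ∀ u, σ < u → u ≤ b → u ∉ C)
    {A B : ℝ} (hA : ∀ j, A ≤ v j σ) (hB : ∀ j, v j σ ≤ B) :
    ∀ t, σ < t → t ≤ b → ∀ i, A ≤ v i t ∧ v i t ≤ B := by
  intro t hσt htb i
  have key : ∀ ε > (0:ℝ), A - ε ≤ v i t ∧ v i t ≤ B + ε := by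
    intro ε hε
    have hev : ∀ᶠ u in 𝓝[Ici σ] σ, ∀ j, v j u ≤ B + ε ∧ A - ε ≤ v j u := by
      rw [eventually_all]
      intro j
      have hrc := h.v_rc j σ hσ
      have h1 : ∀ᶠ u in 𝓝[Ici σ] σ, v j u < B + ε :=
        hrc.tendsto.eventually_lt_const (by linarith [hB j])
      have h2 : ∀ᶠ u in 𝓝[Ici σ] σ, A - ε < v j u :=
        hrc.tendsto.eventually_const_lt (by linarith [hA j])
      filter_upwards [h1, h2] with u hu1 hu2
      exact ⟨hu1.le, hu2.le⟩
    obtain ⟨d, hd, hsub⟩ := mem_nhdsGE_iff_exists_Icc_subset.mp hev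
    set η := min d t with hη
    have hση : σ < η := lt_min hd hσt
    have hηt : η ≤ t := min_le_right _ _
    have hbase : ∀ j, v j η ≤ B + ε ∧ A - ε ≤ v j η :=
      hsub ⟨hση.le, min_le_left _ _⟩
    have := maxprin h (le_trans hσ hση.le) hηt
      (fun u hu => hC u (lt_of_lt_of_le hση hu.1) (le_trans hu.2 htb))
      (fun j => (hbase j).2) (fun j => (hbase j).1) t ⟨hηt, le_rfl⟩ i
    exact ⟨this.1, this.2⟩
  constructor
  · have : ∀ ε > (0:ℝ), A ≤ v i t + ε := fun ε hε => by linarith [(key ε hε).1]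
    linarith [le_of_forall_pos_le_add this]
  · exact le_of_forall_pos_le_add fun ε hε => (key ε hε).2

set_option maxHeartbeats 1000000 in
private lemma vtendsto {N : ℕ} {m : Fin N → ℝ} {φ : ℝ → ℝ} {C : Set ℝ}
    {x v : Fin N → ℝ → ℝ} (h : StickyCS N m φ C x v)
    {σ τ : ℝ} (hσ : 0 ≤ σ) (hστ : σ < τ) (hC : ∀ u, σ < u → u < τ → u ∉ C) (i : Fin N) :
    ∃ L : ℝ, Tendsto (v i) (𝓝[<] τ) (𝓝 L) := by
  -- continuity of Phi
  have hPhiCont : Continuous (Phi φ) := intervalIntegral.continuous_primitive h.φ_locint 0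
  -- derivative of Phi away from 0
  have hPhiDeriv : ∀ z : ℝ, z ≠ 0 → HasDerivAt (Phi φ) (φ z) z := by
    intro z hz
    have hz' : z ∈ ({(0:ℝ)}ᶜ : Set ℝ) := hz
    have hmeas : StronglyMeasurableAtFilter φ (𝓝 z) :=
      ContinuousOn.stronglyMeasurableAtFilter isOpen_compl_singleton h.φ_cont z hz'
    exact intervalIntegral.integral_hasDerivAt_right (h.φ_locint 0 z) hmeas
      (h.φ_cont.continuousAt (isOpen_compl_singleton.mem_nhds hz'))
  -- the finite set of "first touch" times
  set F : Set ℝ := Set.range (fun p : Fin N × Fin N =>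
    sInf {u : ℝ | 0 ≤ u ∧ x p.1 u = x p.2 u}) with hFdef
  have hFfin : F.Finite := Set.finite_range _
  -- near a non-first-touch time, equal particles remain equal
  have hstick : ∀ t : ℝ, 0 < t → t ∉ F → ∀ j k : Fin N, x j t = x k t →
      ∀ᶠ u in 𝓝 t, x j u = x k u := by
    intro t ht htF j k hjk
    set E : Set ℝ := {u : ℝ | 0 ≤ u ∧ x j u = x k u} with hEdef
    have hEne : E.Nonempty := ⟨t, ht.le, hjk⟩
    have hEbdd : BddBelow E := ⟨0, fun u hu => hu.1⟩
    have hEclosed : IsClosed E := by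
      have hg : ContinuousOn (fun u => x j u - x k u) (Ici 0) :=
        (h.x_cont j).sub (h.x_cont k)
      have : E = Ici 0 ∩ (fun u => x j u - x k u) ⁻¹' {0} := by
        ext u
        simp only [hEdef, mem_setOf_eq, mem_inter_iff, mem_Ici, mem_preimage,
          mem_singleton_iff, sub_eq_zero]
      rw [this]
      exact hg.preimage_isClosed_of_isClosed isClosed_Ici isClosed_singleton
    have hmem : sInf E ∈ E := hEclosed.csInf_mem hEne hEbdd
    have hmF : sInf E ∈ F := ⟨(j, k), rfl⟩
    have hmt : sInf E ≤ t := csInf_le hEbdd ⟨ht.le, hjk⟩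
    have hmlt : sInf E < t := lt_of_le_of_ne hmt (fun e => htF (e ▸ hmF))
    filter_upwards [Ioi_mem_nhds hmlt] with u hu
    exact h.sticky j k (sInf E) u hmem.1 (le_of_lt hu) hmem.2
  -- the conserved quantity
  set S : ℝ → ℝ := fun u => ∑ j, m j * Phi φ (x i u - x j u) with hSdef
  set w : ℝ → ℝ := fun u => v i u + S u with hwdef
  -- derivative of w is 0 away from F
  have hw0 : ∀ t ∈ Ioo σ τ, t ∉ F → HasDerivAt w 0 t := by
    intro t ht htF
    have ht0 : (0:ℝ) < t := lt_of_le_of_lt hσ ht.1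
    have htC : t ∉ C := hC t ht.1 ht.2
    have hIci : Ici (0:ℝ) ∈ 𝓝 t := Ici_mem_nhds ht0
    have hvd : HasDerivAt (v i)
        (∑ j ∈ Finset.univ.filter (fun j => x j t ≠ x i t),
          m j * φ (x j t - x i t) * (v j t - v i t)) t :=
      (h.v_deriv i t ⟨ht0.le, htC⟩).hasDerivAt hIci
    set g : Fin N → ℝ := fun j =>
      if x j t = x i t then 0 else φ (x i t - x j t) * (v i t - v j t) with hgdef
    have hterm : ∀ j : Fin N, HasDerivAt (fun u => Phi φ (x i u - x j u)) (g j) t := by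
      intro j
      by_cases heq : x j t = x i t
      · have hev : (fun u => Phi φ (x i u - x j u)) =ᶠ[𝓝 t] (fun _ => Phi φ 0) := by
          filter_upwards [hstick t ht0 htF i j heq.symm] with u hu
          rw [hu, sub_self]
        have : HasDerivAt (fun _ : ℝ => Phi φ 0) 0 t := hasDerivAt_const _ _
        simpa [hgdef, heq] using this.congr_of_eventuallyEq hev
      · have hz : x i t - x j t ≠ 0 := sub_ne_zero.mpr (fun e => heq e.symm)
        have houter : HasDerivAt (Phi φ) (φ (x i t - x j t)) (x i t - x j t) :=
          hPhiDeriv _ hz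
        have hinner : HasDerivAt (fun u => x i u - x j u) (v i t - v j t) t :=
          ((h.x_deriv i t ⟨ht0.le, htC⟩).hasDerivAt hIci).sub
            ((h.x_deriv j t ⟨ht0.le, htC⟩).hasDerivAt hIci)
        have := houter.comp t hinner
        simpa [hgdef, if_neg heq, Function.comp_def] using this
    have hSd : HasDerivAt S (∑ j, m j * g j) t :=
      HasDerivAt.fun_sum fun j _ => (hterm j).const_mul (m j)
    have hwd : HasDerivAt w
        ((∑ j ∈ Finset.univ.filter (fun j => x j t ≠ x i t),
          m j * φ (x j t - x i t) * (v j t - v i t)) + ∑ j, m j * g j) t := hvd.add hSd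
    have hzero : (∑ j ∈ Finset.univ.filter (fun j => x j t ≠ x i t),
        m j * φ (x j t - x i t) * (v j t - v i t)) + ∑ j, m j * g j = 0 := by
      have h1 : ∑ j, m j * g j = ∑ j ∈ Finset.univ.filter (fun j => x j t ≠ x i t),
          m j * g j := by
        rw [Finset.sum_filter]
        apply Finset.sum_congr rfl
        intro j _
        by_cases heq : x j t = x i t
        · simp [hgdef, heq]
        · simp [hgdef, heq]
      rw [h1, ← Finset.sum_add_distrib]
      apply Finset.sum_eq_zero
      intro j hj
      have hne : x j t ≠ x i t := (Finset.mem_filter.mp hj).2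
      have heven : φ (x i t - x j t) = φ (x j t - x i t) := by
        rw [← neg_sub (x j t) (x i t), h.φ_even]
      simp only [hgdef, if_neg hne, heven]
      ring
    rw [hzero] at hwd
    exact hwd
  -- continuity of w on the open interval
  have hwc : ∀ t ∈ Ioo σ τ, ContinuousAt w t := by
    intro t ht
    have ht0 : (0:ℝ) < t := lt_of_le_of_lt hσ ht.1
    have htC : t ∉ C := hC t ht.1 ht.2
    have hIci : Ici (0:ℝ) ∈ 𝓝 t := Ici_mem_nhds ht0
    have hv : ContinuousAt (v i) t :=
      ((h.v_deriv i t ⟨ht0.le, htC⟩).hasDerivAt hIci).continuousAt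
    have hx : ∀ j : Fin N, ContinuousAt (x j) t := fun j =>
      (h.x_cont j t (le_of_lt ht0)).continuousAt hIci
    have hS : ContinuousAt S t := by
      apply tendsto_finset_sum
      intro j _
      exact (continuousAt_const.mul (hPhiCont.continuousAt.comp ((hx i).sub (hx j)))).tendsto
    exact hv.add hS
  -- w is constant on (σ, τ)
  have hwconst : ∀ p ∈ Ioo σ τ, ∀ q ∈ Ioo σ τ, w p = w q := by
    have key : ∀ p ∈ Ioo σ τ, ∀ q ∈ Ioo σ τ, p ≤ q → w p = w q := by
      intro p hp q hq hpq
      have := mvt_finexc (K := 0) hFfin hpq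
        (fun u hu => (hwc u ⟨lt_of_lt_of_le hp.1 hu.1, lt_of_le_of_lt hu.2 hq.2⟩).continuousWithinAt)
        (fun u hu huF => ((hw0 u ⟨lt_trans hp.1 hu.1, lt_trans hu.2 hq.2⟩ huF).hasDerivWithinAt))
        (fun u _ _ => by simp)
      have h0 : |w q - w p| ≤ 0 := by simpa using this
      have := abs_nonneg (w q - w p)
      have : |w q - w p| = 0 := le_antisymm h0 this
      have := abs_eq_zero.mp this
      linarith [sub_eq_zero.mp this]
    intro p hp q hq
    rcases le_total p q with hpq | hqp
    · exact key p hp q hq hpq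
    · exact (key q hq p hp hqp).symm
  -- conclude: v i = const - S near τ from the left
  set p₀ : ℝ := (σ + τ) / 2 with hp₀
  have hp₀mem : p₀ ∈ Ioo σ τ := ⟨by linarith, by linarith⟩
  refine ⟨w p₀ - S τ, ?_⟩
  have hτ0 : τ ∈ Ici (0:ℝ) := mem_Ici.mpr (le_trans hσ hστ.le)
  have hSc : ContinuousWithinAt S (Ici 0) τ := by
    apply tendsto_finset_sum
    intro j _
    have hxij : ContinuousWithinAt (fun u => x i u - x j u) (Ici 0) τ :=
      (h.x_cont i τ hτ0).sub (h.x_cont j τ hτ0)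
    exact (continuousWithinAt_const.mul
      (hPhiCont.continuousAt.comp_continuousWithinAt hxij)).tendsto
  have hfil : 𝓝[<] τ = 𝓝[Ioo σ τ] τ := (nhdsWithin_Ioo_eq_nhdsLT hστ).symm
  have hfil2 : 𝓝[Ioo σ τ] τ ≤ 𝓝[Ici 0] τ :=
    nhdsWithin_mono _ fun u hu => le_trans hσ hu.1.le
  have hSt : Tendsto S (𝓝[<] τ) (𝓝 (S τ)) := by
    rw [hfil]
    exact hSc.tendsto.mono_left hfil2
  have hvt : Tendsto (fun u => w p₀ - S u) (𝓝[<] τ) (𝓝 (w p₀ - S τ)) :=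
    tendsto_const_nhds.sub hSt
  apply hvt.congr'
  rw [hfil]
  filter_upwards [self_mem_nhdsWithin] with u hu
  have hconst := hwconst p₀ hp₀mem u hu
  simp only [hwdef] at hconst ⊢
  linarith

set_option maxHeartbeats 1000000 in
private lemma globbound {N : ℕ} {m : Fin N → ℝ} {φ : ℝ → ℝ} {C : Set ℝ}
    {x v : Fin N → ℝ → ℝ} (h : StickyCS N m φ C x v)
    {A B : ℝ} (hA : ∀ j, A ≤ v j 0) (hB : ∀ j, v j 0 ≤ B) :
    ∀ t, 0 ≤ t → ∀ i, A ≤ v i t ∧ v i t ≤ B := by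
  classical
  set Cf : Finset ℝ := h.C_fin.toFinset with hCf
  have hCfmem : ∀ u, u ∈ Cf ↔ u ∈ C := fun u => h.C_fin.mem_toFinset
  suffices key : ∀ n : ℕ, ∀ t, 0 ≤ t → (Cf.filter (fun u => u ≤ t)).card ≤ n →
      ∀ i, A ≤ v i t ∧ v i t ≤ B by
    intro t ht i
    exact key _ t ht le_rfl i
  have clean : ∀ t, 0 ≤ t → (¬ ∃ u ∈ C, u ≤ t) → ∀ i, A ≤ v i t ∧ v i t ≤ B := by
    intro t ht hnone i
    exact maxprin h le_rfl ht (fun u hu huC => hnone ⟨u, huC, hu.2⟩) hA hB t ⟨ht, le_rfl⟩ i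
  intro n
  induction n with
  | zero =>
    intro t ht hcard i
    refine clean t ht ?_ i
    rintro ⟨u, huC, hut⟩
    have : u ∈ Cf.filter (fun u => u ≤ t) :=
      Finset.mem_filter.mpr ⟨(hCfmem u).mpr huC, hut⟩
    have := Finset.card_pos.mpr ⟨u, this⟩
    omega
  | succ n IH =>
    intro t ht hcard i
    by_cases hempty : (Cf.filter (fun u => u ≤ t)).Nonempty
    swap
    · refine clean t ht ?_ i
      rintro ⟨u, huC, hut⟩
      exact hempty ⟨u, Finset.mem_filter.mpr ⟨(hCfmem u).mpr huC, hut⟩⟩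
    · set σ := (Cf.filter (fun u => u ≤ t)).max' hempty with hσdef
      have hσmem : σ ∈ Cf.filter (fun u => u ≤ t) := Finset.max'_mem _ _
      have hσC : σ ∈ C := (hCfmem σ).mp (Finset.mem_filter.mp hσmem).1
      have hσt : σ ≤ t := (Finset.mem_filter.mp hσmem).2
      have hσ0 : 0 < σ := h.C_pos hσC
      have hnoC : ∀ u, σ < u → u ≤ t → u ∉ C := by
        intro u h1 h2 huC
        have hmem : u ∈ Cf.filter (fun w => w ≤ t) :=
          Finset.mem_filter.mpr ⟨(hCfmem u).mpr huC, h2⟩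
        have := Finset.le_max' _ u hmem
        rw [← hσdef] at this
        linarith
      have hbefore : ∀ u, 0 ≤ u → u < σ → ∀ j, A ≤ v j u ∧ v j u ≤ B := by
        intro u hu huσ j
        refine IH u hu ?_ j
        have hsub : Cf.filter (fun w => w ≤ u) ⊆ (Cf.filter (fun w => w ≤ t)).erase σ := by
          intro w hw
          rw [Finset.mem_erase]
          obtain ⟨hw1, hw2⟩ := Finset.mem_filter.mp hw
          refine ⟨by rintro rfl; linarith, Finset.mem_filter.mpr ⟨hw1, le_trans hw2 (le_trans huσ.le hσt)⟩⟩
        have h1 := Finset.card_le_card hsub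
        have h2 := Finset.card_erase_of_mem hσmem
        omega
      obtain ⟨σ₂, hσ₂0, hσ₂lt, hσ₂noC⟩ :
          ∃ σ₂, 0 ≤ σ₂ ∧ σ₂ < σ ∧ ∀ u, σ₂ < u → u < σ → u ∉ C := by
        by_cases hP : (Cf.filter (fun u => u < σ)).Nonempty
        · set σ₂ := (Cf.filter (fun u => u < σ)).max' hP with hσ₂def
          have hmem2 : σ₂ ∈ Cf.filter (fun u => u < σ) := Finset.max'_mem _ _
          have hσ₂C : σ₂ ∈ C := (hCfmem σ₂).mp (Finset.mem_filter.mp hmem2).1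
          refine ⟨σ₂, (h.C_pos hσ₂C).le, (Finset.mem_filter.mp hmem2).2, ?_⟩
          intro u h1 h2 huC
          have hmem : u ∈ Cf.filter (fun w => w < σ) :=
            Finset.mem_filter.mpr ⟨(hCfmem u).mpr huC, h2⟩
          have := Finset.le_max' _ u hmem
          rw [← hσ₂def] at this
          linarith
        · exact ⟨0, le_rfl, hσ0, fun u h1 h2 huC =>
            hP ⟨u, Finset.mem_filter.mpr ⟨(hCfmem u).mpr huC, h2⟩⟩⟩
      have hσbound : ∀ j, A ≤ v j σ ∧ v j σ ≤ B := by
        have hLim : ∀ j : Fin N, ∃ L, Tendsto (v j) (𝓝[<] σ) (𝓝 L) := fun j =>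
          vtendsto h hσ₂0 hσ₂lt hσ₂noC j
        choose L hL using hLim
        have hneb : (𝓝[<] σ).NeBot := nhdsLT_neBot σ
        have hLbound : ∀ j, A ≤ L j ∧ L j ≤ B := by
          intro j
          have hev : ∀ᶠ u in 𝓝[<] σ, A ≤ v j u ∧ v j u ≤ B := by
            filter_upwards [Ioo_mem_nhdsLT_of_mem (⟨hσ₂lt, le_rfl⟩ : σ ∈ Ioc σ₂ σ)] with u hu
            exact hbefore u (le_trans hσ₂0 hu.1.le) hu.2 j
          exact ⟨ge_of_tendsto (hL j) (hev.mono fun u hu => hu.1),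
                 le_of_tendsto (hL j) (hev.mono fun u hu => hu.2)⟩
        have hleftLim : ∀ j, Function.leftLim (v j) σ = L j := fun j =>
          leftLim_eq_of_tendsto (hL j)
        intro j
        have hcoll := h.collide σ hσC j
        set K := Finset.univ.filter (fun k => x k σ = x j σ) with hKdef
        have hjK : j ∈ K := Finset.mem_filter.mpr ⟨Finset.mem_univ _, rfl⟩
        have hW : 0 < ∑ k ∈ K, m k := Finset.sum_pos (fun k _ => (h.m_pos k)) ⟨j, hjK⟩
        rw [hcoll]
        have hup : ∑ k ∈ K, m k * Function.leftLim (v k) σ ≤ B * ∑ k ∈ K, m k := by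
          rw [Finset.mul_sum]
          apply Finset.sum_le_sum
          intro k _
          rw [hleftLim k, mul_comm B (m k)]
          exact mul_le_mul_of_nonneg_left (hLbound k).2 (h.m_pos k).le
        have hdn : A * ∑ k ∈ K, m k ≤ ∑ k ∈ K, m k * Function.leftLim (v k) σ := by
          rw [Finset.mul_sum]
          apply Finset.sum_le_sum
          intro k _
          rw [hleftLim k, mul_comm A (m k)]
          exact mul_le_mul_of_nonneg_left (hLbound k).1 (h.m_pos k).le
        exact ⟨(le_div_iff₀ hW).mpr hdn, (div_le_iff₀ hW).mpr hup⟩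
      rcases eq_or_lt_of_le hσt with heq | hlt
      · rw [← heq]
        exact hσbound i
      · exact propag h hσ0.le hnoC (fun j => (hσbound j).1) (fun j => (hσbound j).2) t hlt le_rfl i

set_option maxHeartbeats 1000000 in
/-- **L¹ time regularity of the discrete cumulative distribution.**
With `M_N(x,t) = −1/2 + Σ_i m_i 1_{x ≥ x_i(t)}`, for all `0 ≤ s ≤ t`:
`∫ |M_N(·,t) − M_N(·,s)| ≤ Σ_i m_i |x_i(t) − x_i(s)| ≤ (t − s)·max_i |v_i(0)|`. -/
theorem sticky_CS_L1_time_regularity {N : ℕ} (hN : 0 < N) (m : Fin N → ℝ) (φ : ℝ → ℝ)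
    (C : Set ℝ) (x v : Fin N → ℝ → ℝ) (h : StickyCS N m φ C x v)
    (MN : ℝ → ℝ → ℝ)
    (hMN : ∀ y t, MN y t = -(1/2) + ∑ i, m i * (if x i t ≤ y then (1:ℝ) else 0))
    (s t : ℝ) (hs : 0 ≤ s) (hst : s ≤ t) :
    (∫ y : ℝ, |MN y t - MN y s|) ≤ ∑ i, m i * |x i t - x i s| ∧
    ∑ i, m i * |x i t - x i s|
      ≤ (t - s) * Finset.univ.sup' ⟨⟨0, hN⟩, Finset.mem_univ _⟩ (fun i => |v i 0|) := by
  classical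
  set V : ℝ := Finset.univ.sup' ⟨⟨0, hN⟩, Finset.mem_univ _⟩ (fun i => |v i 0|) with hV
  have hVabs : ∀ j, |v j 0| ≤ V := fun j => Finset.le_sup' (fun i => |v i 0|) (Finset.mem_univ j)
  have hV0 : 0 ≤ V := le_trans (abs_nonneg _) (hVabs ⟨0, hN⟩)
  have hvb : ∀ u, 0 ≤ u → ∀ i, |v i u| ≤ V := by
    intro u hu i
    have := globbound h (A := -V) (B := V)
      (fun j => (abs_le.mp (hVabs j)).1) (fun j => (abs_le.mp (hVabs j)).2) u hu i
    exact abs_le.mpr this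
  -- Lipschitz bound on each trajectory
  have hlip : ∀ i, |x i t - x i s| ≤ V * (t - s) := by
    intro i
    refine mvt_finexc (K := V) (f' := v i) h.C_fin hst ?_ ?_ ?_
    · exact (h.x_cont i).mono (fun u hu => le_trans hs hu.1)
    · intro u hu huC
      have hu0 : (0:ℝ) ≤ u := le_trans hs hu.1.le
      exact (h.x_deriv i u ⟨hu0, huC⟩).mono (Ici_subset_Ici.mpr hu0)
    · intro u hu huC
      exact hvb u (le_trans hs hu.1.le) i
  have part2 : ∑ i, m i * |x i t - x i s| ≤ (t - s) * V := by
    calc ∑ i, m i * |x i t - x i s| ≤ ∑ i : Fin N, m i * (V * (t - s)) :=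
          Finset.sum_le_sum fun i _ =>
            mul_le_mul_of_nonneg_left (hlip i) (h.m_pos i).le
      _ = (∑ i, m i) * (V * (t - s)) := by rw [Finset.sum_mul]
      _ = (t - s) * V := by rw [h.m_sum]; ring
  -- Part 1
  set f : Fin N → ℝ → ℝ := fun i y =>
    (Ico (min (x i t) (x i s)) (max (x i t) (x i s))).indicator
      (fun _ => if x i t ≤ x i s then (1:ℝ) else -1) y with hf
  have hind : ∀ (a b y : ℝ), ((if a ≤ y then (1:ℝ) else 0) - (if b ≤ y then (1:ℝ) else 0))
      = (Ico (min a b) (max a b)).indicator (fun _ => if a ≤ b then (1:ℝ) else -1) y := by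
    intro a b y
    by_cases h3 : a ≤ b
    · rw [min_eq_left h3, max_eq_right h3, if_pos h3, Set.indicator_apply]
      by_cases hmem : y ∈ Ico a b
      · rw [if_pos hmem, if_pos hmem.1, if_neg (not_le.mpr hmem.2)]
        norm_num
      · rw [if_neg hmem]
        rw [mem_Ico, not_and_or, not_le, not_lt] at hmem
        rcases hmem with hy | hy
        · rw [if_neg (not_le.mpr hy), if_neg (not_le.mpr (lt_of_lt_of_le hy h3))]
          norm_num
        · rw [if_pos (le_trans h3 hy), if_pos hy]
          norm_num
    · push_neg at h3
      rw [min_eq_right h3.le, max_eq_left h3.le, if_neg (not_le.mpr h3), Set.indicator_apply]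
      by_cases hmem : y ∈ Ico b a
      · rw [if_pos hmem, if_neg (not_le.mpr hmem.2), if_pos hmem.1]
        norm_num
      · rw [if_neg hmem]
        rw [mem_Ico, not_and_or, not_le, not_lt] at hmem
        rcases hmem with hy | hy
        · rw [if_neg (not_le.mpr (lt_trans hy h3)), if_neg (not_le.mpr hy)]
          norm_num
        · rw [if_pos (le_trans h3.le hy), if_pos hy]
          norm_num
  have hg : ∀ y, MN y t - MN y s = ∑ i, m i * f i y := by
    intro y
    rw [hMN y t, hMN y s]
    have : ∀ i : Fin N, m i * f i y =
        m i * ((if x i t ≤ y then (1:ℝ) else 0) - (if x i s ≤ y then (1:ℝ) else 0)) := by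
      intro i
      simp only [hf]
      rw [← hind (x i t) (x i s) y]
    rw [Finset.sum_congr rfl fun i _ => this i]
    simp only [mul_sub]
    rw [Finset.sum_sub_distrib]
    ring
  have hfint : ∀ i, Integrable (f i) := by
    intro i
    rw [hf]
    refine (integrable_indicator_iff measurableSet_Ico).mpr ?_
    apply (integrableOn_const_iff (by simp)).mpr
    exact Or.inr measure_Ico_lt_top
  have hfabs : ∀ i y, |f i y| =
      (Ico (min (x i t) (x i s)) (max (x i t) (x i s))).indicator (fun _ => (1:ℝ)) y := by
    intro i y
    rw [hf]
    simp only [Set.indicator_apply]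
    by_cases hy : y ∈ Ico (min (x i t) (x i s)) (max (x i t) (x i s))
    · rw [if_pos hy, if_pos hy]
      by_cases hc : x i t ≤ x i s <;> simp [hc]
    · rw [if_neg hy, if_neg hy, abs_zero]
  have hfabsint : ∀ i, ∫ y, |f i y| = |x i t - x i s| := by
    intro i
    have : (fun y => |f i y|) =
        (Ico (min (x i t) (x i s)) (max (x i t) (x i s))).indicator (fun _ => (1:ℝ)) := by
      funext y
      exact hfabs i y
    rw [this, integral_indicator_const (1:ℝ) measurableSet_Ico]
    rw [measureReal_def, Real.volume_Ico, smul_eq_mul, mul_one]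
    rw [ENNReal.toReal_ofReal (by simp [min_le_max] : (0:ℝ) ≤ max (x i t) (x i s) - min (x i t) (x i s))]
    rw [max_sub_min_eq_abs]
    exact abs_sub_comm _ _
  have hgint : Integrable (fun y => ∑ i, m i * f i y) :=
    integrable_finset_sum _ fun i _ => (hfint i).const_mul _
  have hsumabs : Integrable (fun y => ∑ i, m i * |f i y|) := by
    apply integrable_finset_sum _ fun i _ => ?_
    exact ((hfint i).abs.const_mul _)
  have part1 : (∫ y : ℝ, |MN y t - MN y s|) ≤ ∑ i, m i * |x i t - x i s| := by
    have heq1 : (∫ y : ℝ, |MN y t - MN y s|) = ∫ y, |∑ i, m i * f i y| := by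
      congr 1
      funext y
      rw [hg y]
    rw [heq1]
    calc ∫ y, |∑ i, m i * f i y| ≤ ∫ y, ∑ i, m i * |f i y| := by
          apply integral_mono hgint.abs hsumabs
          intro y
          refine le_trans (Finset.abs_sum_le_sum_abs _ _) ?_
          apply le_of_eq
          exact Finset.sum_congr rfl fun i _ => by
            rw [abs_mul, abs_of_nonneg (h.m_pos i).le]
      _ = ∑ i, m i * ∫ y, |f i y| := by
          rw [integral_finset_sum _ fun i _ => ((hfint i).abs.const_mul _)]
          exact Finset.sum_congr rfl fun i _ => integral_const_mul _ _
      _ = ∑ i, m i * |x i t - x i s| :=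
          Finset.sum_congr rfl fun i _ => by rw [hfabsint i]
  exact ⟨part1, part2⟩
end

section
/- Let ρ be a Borel probability measure on ℝ with support contained in [−R, R], let M(x) = ρ((−∞,x]) − 1/2, let φ : ℝ → [0,∞) be even and locally integrable, and let Φ(x) = ∫_0^x φ(y)dy. Then for every x ∈ [−R, R], ∫_{−2R}^{2R} φ(z) M(x − z) dz = ∫_ℝ Φ(x − y) dρ(y). -/
open MeasureTheory Set

/-- **truncated convolution identity.** Let `ρ` be a probability measure
supported in `[−R,R]`, `M(x) = ρ((−∞,x]) − 1/2`, `φ ≥ 0` even and locally integrable, and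
`Φ(x) = ∫_0^x φ`. Then for every `x ∈ [−R,R]`,
`∫_{−2R}^{2R} φ(z) M(x−z) dz = ∫ Φ(x−y) dρ(y)`. -/
theorem truncated_convolution_eq_potential
    (R : ℝ) (hR : 0 < R)
    (ρ : Measure ℝ) [IsProbabilityMeasure ρ] (hsupp : ρ (Icc (-R) R)ᶜ = 0)
    (M : ℝ → ℝ) (hM : ∀ x, M x = (ρ (Iic x)).toReal - 1/2)
    (φ : ℝ → ℝ) (hφ_nonneg : ∀ z, 0 ≤ φ z) (hφ_even : ∀ z, φ (-z) = φ z)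
    (hφ_locint : ∀ a b : ℝ, IntervalIntegrable φ volume a b) :
    ∀ x ∈ Icc (-R) R,
      (∫ z in (-(2*R))..(2*R), φ z * M (x - z))
        = ∫ y, (∫ u in (0:ℝ)..(x - y), φ u) ∂ρ := by
  intro x hx
  have h2R : -(2*R) ≤ 2*R := by linarith
  set s : Set ℝ := Ioc (-(2*R)) (2*R) with hs
  set μ : Measure ℝ := volume.restrict s with hμ
  -- φ is integrable on s
  have hφ_int : Integrable φ μ := by
    rw [hμ, hs]
    exact (hφ_locint (-(2*R)) (2*R)).1
  -- the kernel
  set f : ℝ → ℝ → ℝ := fun z y => φ z * ((Iic (x - y)).indicator (fun _ => (1:ℝ)) z - 1/2)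
    with hfdef
  -- integrability on the product
  have hmeas : AEStronglyMeasurable (fun p : ℝ × ℝ => f p.1 p.2) (μ.prod ρ) := by
    have h1 : AEStronglyMeasurable (fun p : ℝ × ℝ => φ p.1) (μ.prod ρ) :=
      hφ_int.1.comp_fst
    have h2 : Measurable fun p : ℝ × ℝ =>
        (Iic (x - p.2)).indicator (fun _ => (1:ℝ)) p.1 - 1/2 := by
      have : Measurable fun p : ℝ × ℝ =>
          ({q : ℝ × ℝ | q.1 ≤ x - q.2}).indicator (fun _ => (1:ℝ)) p := by
        exact (measurable_const.indicator
          (measurableSet_le measurable_fst (measurable_const.sub measurable_snd)))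
      have heq : (fun p : ℝ × ℝ => (Iic (x - p.2)).indicator (fun _ => (1:ℝ)) p.1)
          = fun p : ℝ × ℝ => ({q : ℝ × ℝ | q.1 ≤ x - q.2}).indicator (fun _ => (1:ℝ)) p := by
        funext p
        by_cases h : p.1 ≤ x - p.2 <;>
          simp [Set.indicator, h]
      have h3 : Measurable fun p : ℝ × ℝ => (Iic (x - p.2)).indicator (fun _ => (1:ℝ)) p.1 :=
        heq ▸ this
      exact h3.sub measurable_const
    exact h1.mul h2.aestronglyMeasurable
  have hInt : Integrable (fun p : ℝ × ℝ => f p.1 p.2) (μ.prod ρ) := by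
    refine Integrable.mono' (g := fun p : ℝ × ℝ => φ p.1) ?_ hmeas ?_
    · exact (hφ_int.mul_prod (integrable_const (1:ℝ))).congr (by
        filter_upwards with p; simp)
    · filter_upwards with p
      rw [hfdef]
      simp only [Real.norm_eq_abs, abs_mul]
      have h1 : |φ p.1| = φ p.1 := abs_of_nonneg (hφ_nonneg _)
      have h2 : |(Iic (x - p.2)).indicator (fun _ => (1:ℝ)) p.1 - 1/2| ≤ 1 := by
        by_cases h : p.1 ∈ Iic (x - p.2)
        · rw [Set.indicator_of_mem h]; rw [abs_le]; constructor <;> norm_num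
        · rw [Set.indicator_of_notMem h]; rw [abs_le]; constructor <;> norm_num
      calc |φ p.1| * |(Iic (x - p.2)).indicator (fun _ => (1:ℝ)) p.1 - 1/2|
          ≤ |φ p.1| * 1 := by
            exact mul_le_mul_of_nonneg_left h2 (abs_nonneg _)
        _ = φ p.1 := by rw [h1, mul_one]
  -- Step 1: rewrite LHS as double integral
  have step1 : (∫ z in (-(2*R))..(2*R), φ z * M (x - z)) = ∫ z, (∫ y, f z y ∂ρ) ∂μ := by
    rw [intervalIntegral.integral_of_le h2R]
    refine setIntegral_congr_fun measurableSet_Ioc fun z _ => ?_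
    have hM' : M (x - z) = ∫ y, ((Iic (x - y)).indicator (fun _ => (1:ℝ)) z - 1/2) ∂ρ := by
      rw [hM]
      have hind : ∫ y, (Iic (x - y)).indicator (fun _ => (1:ℝ)) z ∂ρ
          = (ρ (Iic (x - z))).toReal := by
        have : ∀ y : ℝ, (Iic (x - y)).indicator (fun _ => (1:ℝ)) z
            = (Iic (x - z)).indicator (fun _ => (1:ℝ)) y := by
          intro y
          by_cases h : z ≤ x - y
          · have h' : y ≤ x - z := by linarith
            simp [h, h']
          · have h' : ¬ y ≤ x - z := by intro hc; exact h (by linarith)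
            simp [h, h']
        simp only [this]
        rw [integral_indicator_const (1:ℝ) measurableSet_Iic]
        simp
        rfl
      have hInd1 : Integrable (fun y : ℝ => (Iic (x - y)).indicator (fun _ => (1:ℝ)) z) ρ := by
        refine (integrable_const (1:ℝ)).mono' ?_ ?_
        · have heq2 : ∀ y : ℝ, (Iic (x - y)).indicator (fun _ => (1:ℝ)) z
              = (Iic (x - z)).indicator (fun _ => (1:ℝ)) y := by
            intro y
            by_cases h : z ≤ x - y
            · have h' : y ≤ x - z := by linarith
              simp [h, h']
            · have h' : ¬ y ≤ x - z := by intro hc; exact h (by linarith)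
              simp [h, h']
          simp only [heq2]
          exact (measurable_const.indicator measurableSet_Iic).aestronglyMeasurable
        · filter_upwards with y
          by_cases h : z ∈ Iic (x - y) <;> simp [h]
      rw [integral_sub hInd1 (integrable_const _), hind]
      simp
    rw [hM', ← MeasureTheory.integral_const_mul]
  rw [step1]
  -- Step 2: Fubini
  rw [MeasureTheory.integral_integral_swap (f := f) hInt]
  -- Step 3: a.e. pointwise identity
  have hρIcc : ∀ᵐ y ∂ρ, y ∈ Icc (-R) R := by
    rw [ae_iff]
    convert hsupp using 2
    rfl
  refine integral_congr_ae ?_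
  filter_upwards [hρIcc] with y hy
  have hy1 : -R ≤ y := hy.1
  have hy2 : y ≤ R := hy.2
  have hc1 : -(2*R) ≤ x - y := by have := hx.1; simp at this ⊢; linarith [hx.1]
  have hc2 : x - y ≤ 2*R := by have := hx.2; linarith [hy1, hx.2]
  -- compute inner integral
  have key : (∫ z, f z y ∂μ) = ∫ u in (0:ℝ)..(x - y), φ u := by
    have split : (fun z => f z y)
        = fun z => (Iic (x - y)).indicator φ z - (1/2) * φ z := by
      funext z
      by_cases h : z ∈ Iic (x - y) <;> simp [hfdef, h] <;> ring
    rw [split]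
    have hind_int : Integrable ((Iic (x - y)).indicator φ) μ := by
      refine hφ_int.mono' ?_ ?_
      · exact hφ_int.1.indicator measurableSet_Iic
      · filter_upwards with z
        by_cases h : z ∈ Iic (x - y)
        · simp [h, abs_of_nonneg (hφ_nonneg z)]
        · simp [h, hφ_nonneg z]
    rw [integral_sub hind_int (hφ_int.const_mul _)]
    have h1 : (∫ z, (Iic (x - y)).indicator φ z ∂μ) = ∫ z in (-(2*R))..(x - y), φ z := by
      have hset : Iic (x - y) ∩ s = Ioc (-(2*R)) (x - y) := by
        rw [hs]
        ext z
        simp only [mem_inter_iff, mem_Iic, mem_Ioc]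
        constructor
        · rintro ⟨h1, h2, h3⟩; exact ⟨h2, h1⟩
        · rintro ⟨h1, h2⟩; exact ⟨h2, h1, le_trans h2 hc2⟩
      rw [hμ, integral_indicator measurableSet_Iic, Measure.restrict_restrict measurableSet_Iic,
        hset, intervalIntegral.integral_of_le hc1]
    have h2 : (∫ z, (1/2 : ℝ) * φ z ∂μ) = ∫ z in (-(2*R))..(0:ℝ), φ z := by
      rw [MeasureTheory.integral_const_mul, hμ, hs, ← intervalIntegral.integral_of_le h2R]
      have heven : (∫ z in (-(2*R))..(0:ℝ), φ z) = ∫ z in (0:ℝ)..(2*R), φ z := by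
        have h := intervalIntegral.integral_comp_neg (a := (0:ℝ)) (b := 2*R) (f := φ)
        simp only [hφ_even, neg_zero] at h
        exact h.symm
      have hsplit : (∫ z in (-(2*R))..(2*R), φ z)
          = (∫ z in (-(2*R))..(0:ℝ), φ z) + ∫ z in (0:ℝ)..(2*R), φ z :=
        (intervalIntegral.integral_add_adjacent_intervals
          (hφ_locint _ _) (hφ_locint _ _)).symm
      rw [hsplit, heven]
      ring
    rw [h1, h2]
    rw [← intervalIntegral.integral_add_adjacent_intervals
      (a := -(2*R)) (b := (0:ℝ)) (c := x - y) (hφ_locint _ _) (hφ_locint _ _)]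
    ring
  exact key
end

section
/- Let s ∈ (0,1], c_s > 0, δ > 0, and let φ : ℝ → [0,∞) be even, nonincreasing on (0,∞), and satisfy φ(z) ≤ c_s·z^{s−1} for all 0 < z ≤ δ. Let Φ(x) = ∫_0^x φ(y)dy, and let ρ be a Borel probability measure on ℝ with support contained in [−R, R]. Then the function x ↦ ∫_ℝ Φ(x − y) dρ(y) is s-Hölder continuous on [−R, R]: there exists a constant K, depending only on c_s, s, δ, φ(δ), and R, such that |∫ Φ(x − y) dρ(y) − ∫ Φ(x' − y) dρ(y)| ≤ K|x − x'|^s for all x, x' ∈ [−R, R]. -/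
open MeasureTheory Set

/-- **Hölder regularity of the nonlocal potential.** Let `s ∈ (0,1]`,
`φ ≥ 0` even, nonincreasing on `(0,∞)`, with `φ(z) ≤ c_s z^{s−1}` for `0 < z ≤ δ`, and
`Φ(x) = ∫_0^x φ`. Then there is a constant `K ≥ 0`, depending only on `c_s, s, δ, φ(δ), R`
(in particular not on the measure), such that for every probability measure `ρ` supported
in `[−R,R]`, the map `x ↦ ∫ Φ(x−y) dρ(y)` is `s`-Hölder on `[−R,R]` with constant `K`. -/
theorem potential_holder_continuity
    (s cs δ R : ℝ) (hs : s ∈ Ioc (0:ℝ) 1) (hcs : 0 < cs) (hδ : 0 < δ) (hR : 0 < R)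
    (φ : ℝ → ℝ) (hφ_nonneg : ∀ z, 0 ≤ φ z) (hφ_even : ∀ z, φ (-z) = φ z)
    (hφ_anti : AntitoneOn φ (Ioi 0))
    (hφ_bound : ∀ z : ℝ, 0 < z → z ≤ δ → φ z ≤ cs * z ^ (s - 1)) :
    ∃ K : ℝ, 0 ≤ K ∧
      ∀ ρ : Measure ℝ, IsProbabilityMeasure ρ → ρ (Icc (-R) R)ᶜ = 0 →
        ∀ x ∈ Icc (-R) R, ∀ x' ∈ Icc (-R) R,
          |(∫ y, (∫ u in (0:ℝ)..(x - y), φ u) ∂ρ)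
            - ∫ y, (∫ u in (0:ℝ)..(x' - y), φ u) ∂ρ|
          ≤ K * |x - x'| ^ s := by
  obtain ⟨hs0, hs1⟩ := hs
  have hδs : (0:ℝ) < δ ^ s := Real.rpow_pos_of_pos hδ s
  -- interval integrability of φ
  have hII0 : ∀ t : ℝ, 0 ≤ t → IntervalIntegrable φ volume 0 t := by
    intro t ht
    have hmin0 : (0:ℝ) ≤ min t δ := le_min ht hδ.le
    have h1 : IntegrableOn φ (Ioc 0 (min t δ)) volume := by
      have hmeas : AEMeasurable φ (volume.restrict (Ioc 0 (min t δ))) :=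
        aemeasurable_restrict_of_antitoneOn measurableSet_Ioc
          (hφ_anti.mono (fun u hu => hu.1))
      have hrint : IntegrableOn (fun u : ℝ => cs * u ^ (s-1)) (Ioc 0 (min t δ)) volume := by
        have := (intervalIntegral.intervalIntegrable_rpow'
          (a := 0) (b := min t δ) (by linarith : (-1:ℝ) < s - 1)).const_mul cs
        exact (intervalIntegrable_iff_integrableOn_Ioc_of_le hmin0).1 this
      refine Integrable.mono' hrint hmeas.aestronglyMeasurable ?_
      rw [ae_restrict_iff' measurableSet_Ioc]
      filter_upwards with u hu
      rw [Real.norm_eq_abs, abs_of_nonneg (hφ_nonneg u)]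
      exact hφ_bound u hu.1 (hu.2.trans (min_le_right _ _))
    have h2 : IntegrableOn φ (Ioc (min t δ) t) volume := by
      rcases le_or_gt t δ with h | h
      · rw [min_eq_left h]
        simp
      · have hIcc : IntegrableOn φ (Icc δ t) volume := by
          refine AntitoneOn.integrableOn_isCompact isCompact_Icc
            (hφ_anti.mono (fun u hu => ?_))
          exact mem_Ioi.2 (lt_of_lt_of_le hδ hu.1)
        refine hIcc.mono_set ?_
        rw [min_eq_right h.le]
        exact Ioc_subset_Icc_self
    have := h1.union h2
    rw [Ioc_union_Ioc_eq_Ioc hmin0 (min_le_left _ _)] at this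
    exact (intervalIntegrable_iff_integrableOn_Ioc_of_le ht).2 this
  have hII : ∀ a b : ℝ, IntervalIntegrable φ volume a b := by
    have h0 : ∀ t : ℝ, IntervalIntegrable φ volume 0 t := by
      intro t
      rcases le_or_gt 0 t with h | h
      · exact hII0 t h
      · have := (IntervalIntegrable.iff_comp_neg).mp (hII0 (-t) (by linarith))
        simpa only [hφ_even, neg_zero, neg_neg] using this
    intro a b
    exact (h0 a).symm.trans (h0 b)
  have hInt_nonneg : ∀ t : ℝ, 0 ≤ t → 0 ≤ ∫ u in (0:ℝ)..t, φ u := fun t ht =>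
    intervalIntegral.integral_nonneg ht (fun u _ => hφ_nonneg u)
  have hmono0 : ∀ a b : ℝ, 0 ≤ a → a ≤ b →
      (∫ u in (0:ℝ)..a, φ u) ≤ ∫ u in (0:ℝ)..b, φ u := by
    intro a b _ hab
    have hadd := intervalIntegral.integral_add_adjacent_intervals (hII 0 a) (hII a b)
    have hnn : 0 ≤ ∫ u in a..b, φ u :=
      intervalIntegral.integral_nonneg hab (fun u _ => hφ_nonneg u)
    linarith
  -- shift bound
  have hshift : ∀ a h : ℝ, 0 ≤ a → 0 ≤ h →
      (∫ u in a..(a + h), φ u) ≤ ∫ u in (0:ℝ)..h, φ u := by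
    intro a h ha hh
    have h1 : (∫ u in a..(a + h), φ u) = ∫ u in (0:ℝ)..h, φ (u + a) := by
      rw [intervalIntegral.integral_comp_add_right (f := φ) a, zero_add, add_comm]
    rw [h1, intervalIntegral.integral_of_le hh, intervalIntegral.integral_of_le hh]
    have hint1 : IntervalIntegrable (fun u : ℝ => φ (u + a)) volume 0 h := by
      have := (hII a (a + h)).comp_add_right a
      simpa using this
    refine setIntegral_mono_on hint1.1 (hII 0 h).1 measurableSet_Ioc ?_
    intro u hu
    exact hφ_anti (mem_Ioi.2 hu.1) (mem_Ioi.2 (by linarith [hu.1])) (by linarith)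
  -- reflection
  have hrefl : ∀ a b : ℝ, (∫ u in a..b, φ u) = ∫ u in (-b)..(-a), φ u := by
    intro a b
    have := intervalIntegral.integral_comp_neg (a := a) (b := b) (f := φ)
    simpa only [hφ_even] using this
  -- key interval bound
  have key : ∀ a b : ℝ, a ≤ b →
      (∫ u in a..b, φ u) ≤ 2 * ∫ u in (0:ℝ)..(b - a), φ u := by
    have hbase : ∀ a b : ℝ, 0 ≤ a → a ≤ b →
        (∫ u in a..b, φ u) ≤ ∫ u in (0:ℝ)..(b - a), φ u := by
      intro a b ha hab
      have := hshift a (b - a) ha (by linarith)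
      rwa [show a + (b - a) = b by ring] at this
    intro a b hab
    rcases le_or_gt 0 a with ha | ha
    · have := hbase a b ha hab
      have hnn := hInt_nonneg (b - a) (by linarith)
      linarith
    rcases le_or_gt b 0 with hb | hb
    · rw [hrefl a b]
      have := hbase (-b) (-a) (by linarith) (by linarith)
      rw [show -a - -b = b - a by ring] at this
      have hnn := hInt_nonneg (b - a) (by linarith)
      linarith
    · have hsplit := intervalIntegral.integral_add_adjacent_intervals (hII a 0) (hII 0 b)
      have h1 : (∫ u in a..(0:ℝ), φ u) = ∫ u in (0:ℝ)..(-a), φ u := by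
        rw [hrefl a 0, neg_zero]
      have h2 : (∫ u in (0:ℝ)..(-a), φ u) ≤ ∫ u in (0:ℝ)..(b - a), φ u :=
        hmono0 _ _ (by linarith) (by linarith)
      have h3 : (∫ u in (0:ℝ)..b, φ u) ≤ ∫ u in (0:ℝ)..(b - a), φ u :=
        hmono0 _ _ hb.le (by linarith)
      linarith
  -- small scale bound
  have bound_small : ∀ h : ℝ, 0 ≤ h → h ≤ δ →
      (∫ u in (0:ℝ)..h, φ u) ≤ cs * h ^ s / s := by
    intro h h0 hhδ
    have hrint : IntervalIntegrable (fun u : ℝ => cs * u ^ (s - 1)) volume 0 h :=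
      (intervalIntegral.intervalIntegrable_rpow' (by linarith)).const_mul cs
    have hle : (∫ u in (0:ℝ)..h, φ u) ≤ ∫ u in (0:ℝ)..h, cs * u ^ (s - 1) := by
      rw [intervalIntegral.integral_of_le h0, intervalIntegral.integral_of_le h0]
      refine setIntegral_mono_on (hII 0 h).1 hrint.1 measurableSet_Ioc ?_
      intro u hu
      exact hφ_bound u hu.1 (hu.2.trans hhδ)
    have hcalc : (∫ u in (0:ℝ)..h, cs * u ^ (s - 1)) = cs * h ^ s / s := by
      rw [intervalIntegral.integral_const_mul, integral_rpow (Or.inl (by linarith))]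
      rw [sub_add_cancel, Real.zero_rpow hs0.ne']
      ring
    linarith
  obtain ⟨C, hC_def⟩ : ∃ C : ℝ, C = cs * δ ^ s / s + 2 * R * φ δ := ⟨_, rfl⟩
  have hC0 : 0 ≤ C := by
    have h1 : 0 ≤ cs * δ ^ s / s := by positivity
    have h2 : 0 ≤ 2 * R * φ δ := by
      have := hφ_nonneg δ
      nlinarith
    linarith
  obtain ⟨M, hM_def⟩ : ∃ M : ℝ, M = cs / s + C / δ ^ s := ⟨_, rfl⟩
  have hM0 : 0 ≤ M := by
    have h1 : 0 ≤ cs / s := by positivity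
    have h2 : 0 ≤ C / δ ^ s := div_nonneg hC0 hδs.le
    linarith
  have bound_h : ∀ h : ℝ, 0 ≤ h → h ≤ 2 * R →
      (∫ u in (0:ℝ)..h, φ u) ≤ M * h ^ s := by
    intro h h0 h2R
    have hhs : 0 ≤ h ^ s := Real.rpow_nonneg h0 s
    rcases le_or_gt h δ with hhδ | hhδ
    · have h1 := bound_small h h0 hhδ
      have hM : cs / s ≤ M := by
        have h2 : 0 ≤ C / δ ^ s := div_nonneg hC0 hδs.le
        linarith
      calc (∫ u in (0:ℝ)..h, φ u) ≤ cs * h ^ s / s := h1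
        _ = (cs / s) * h ^ s := by ring
        _ ≤ M * h ^ s := mul_le_mul_of_nonneg_right hM hhs
    · have hsplit := intervalIntegral.integral_add_adjacent_intervals (hII 0 δ) (hII δ h)
      have e1 : (∫ u in (0:ℝ)..δ, φ u) ≤ cs * δ ^ s / s := bound_small δ hδ.le le_rfl
      have e2 : (∫ u in δ..h, φ u) ≤ φ δ * (h - δ) := by
        have hmono : (∫ u in δ..h, φ u) ≤ ∫ u in δ..h, φ δ := by
          rw [intervalIntegral.integral_of_le hhδ.le, intervalIntegral.integral_of_le hhδ.le]
          refine setIntegral_mono_on (hII δ h).1 (integrableOn_const (lt_top_iff_ne_top.1 ?_))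
            measurableSet_Ioc ?_
          · rw [Real.volume_Ioc]
            exact ENNReal.ofReal_lt_top
          · intro u hu
            exact hφ_anti (mem_Ioi.2 hδ) (mem_Ioi.2 (hδ.trans hu.1)) hu.1.le
        rw [intervalIntegral.integral_const, smul_eq_mul, mul_comm] at hmono
        exact hmono
      have e3 : φ δ * (h - δ) ≤ 2 * R * φ δ := by nlinarith [hφ_nonneg δ]
      have hC : (∫ u in (0:ℝ)..h, φ u) ≤ C := by rw [← hsplit, hC_def]; linarith
      have hCd : C ≤ (C / δ ^ s) * h ^ s := by
        have h1 : δ ^ s ≤ h ^ s := Real.rpow_le_rpow hδ.le hhδ.le hs0.le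
        rw [div_mul_eq_mul_div, le_div_iff₀ hδs]
        nlinarith
      have hlast : (C / δ ^ s) * h ^ s ≤ M * h ^ s := by
        refine mul_le_mul_of_nonneg_right ?_ hhs
        have : 0 ≤ cs / s := by positivity
        linarith
      linarith
  -- Hölder bound for the primitive
  have habs : ∀ a b : ℝ, |b - a| ≤ 2 * R →
      |∫ u in a..b, φ u| ≤ 2 * M * |b - a| ^ s := by
    have hcase : ∀ a b : ℝ, a ≤ b → b - a ≤ 2 * R →
        |∫ u in a..b, φ u| ≤ 2 * M * (b - a) ^ s := by
      intro a b hab h2R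
      rw [abs_of_nonneg (intervalIntegral.integral_nonneg hab (fun u _ => hφ_nonneg u))]
      have h1 := key a b hab
      have h2 := bound_h (b - a) (by linarith) h2R
      calc (∫ u in a..b, φ u) ≤ 2 * ∫ u in (0:ℝ)..(b - a), φ u := h1
        _ ≤ 2 * (M * (b - a) ^ s) := by linarith
        _ = 2 * M * (b - a) ^ s := by ring
    intro a b hab
    rcases le_total a b with h | h
    · rw [abs_of_nonneg (by linarith : (0:ℝ) ≤ b - a)] at hab ⊢
      exact hcase a b h hab
    · rw [abs_of_nonpos (by linarith : b - a ≤ 0)] at hab ⊢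
      rw [intervalIntegral.integral_symm, abs_neg, show -(b - a) = a - b by ring] at *
      exact hcase b a h hab
  -- finish
  refine ⟨2 * M, by linarith, ?_⟩
  intro ρ hρ hsupp x hx x' hx'
  have hΦc : Continuous fun t : ℝ => ∫ u in (0:ℝ)..t, φ u :=
    intervalIntegral.continuous_primitive (fun a b => hII a b) 0
  have hae : ∀ᵐ y ∂ρ, y ∈ Icc (-R) R := by
    rw [ae_iff]
    exact hsupp
  have hint : ∀ z : ℝ, z ∈ Icc (-R) R →
      Integrable (fun y => ∫ u in (0:ℝ)..(z - y), φ u) ρ := by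
    intro z hz
    refine Integrable.mono' (integrable_const (2 * M * (2 * R) ^ s))
      ((hΦc.comp (continuous_const.sub continuous_id)).aestronglyMeasurable) ?_
    filter_upwards [hae] with y hy
    have h1 : |z - y| ≤ 2 * R := by
      rw [abs_le]
      exact ⟨by linarith [hz.1, hy.2], by linarith [hz.2, hy.1]⟩
    have h2 := habs 0 (z - y) (by simpa using h1)
    rw [sub_zero] at h2
    have h3 : |z - y| ^ s ≤ (2 * R) ^ s :=
      Real.rpow_le_rpow (abs_nonneg _) h1 hs0.le
    rw [Real.norm_eq_abs]
    calc |∫ u in (0:ℝ)..(z - y), φ u| ≤ 2 * M * |z - y| ^ s := h2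
      _ ≤ 2 * M * (2 * R) ^ s := by nlinarith
  have hsub := integral_sub (hint x hx) (hint x' hx')
  rw [← hsub]
  have hbd : ∀ y : ℝ, ‖(∫ u in (0:ℝ)..(x - y), φ u) - ∫ u in (0:ℝ)..(x' - y), φ u‖
      ≤ 2 * M * |x - x'| ^ s := by
    intro y
    have hdiff : (∫ u in (0:ℝ)..(x - y), φ u) - (∫ u in (0:ℝ)..(x' - y), φ u)
        = ∫ u in (x' - y)..(x - y), φ u :=
      intervalIntegral.integral_interval_sub_left (hII 0 (x - y)) (hII 0 (x' - y))
    have hR2 : |x - x'| ≤ 2 * R := by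
      rw [abs_le]
      exact ⟨by linarith [hx.1, hx'.2], by linarith [hx.2, hx'.1]⟩
    have := habs (x' - y) (x - y) (by rw [show x - y - (x' - y) = x - x' by ring]; exact hR2)
    rw [show x - y - (x' - y) = x - x' by ring] at this
    rw [Real.norm_eq_abs, hdiff]
    exact this
  have := norm_integral_le_of_norm_le_const (μ := ρ)
    (f := fun y => (∫ u in (0:ℝ)..(x - y), φ u) - ∫ u in (0:ℝ)..(x' - y), φ u)
    (C := 2 * M * |x - x'| ^ s) (Filter.Eventually.of_forall hbd)
  rwa [Real.norm_eq_abs, probReal_univ, mul_one] at this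
end
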